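/- There exists a formal power series h(x) = x + Σ_{j≥2} h_j x^j over K such that h(f(x)) = λ·(h(x))^M as formal power series. -/

import Mathlib

/-- Formal composition `h ∘ f` of one-variable power series; it agrees with
substitution of `f` into `h` when `f` has zero constant term. -/
noncomputable def PowerSeries.formalComp {K : Type*} [CommRing K]
    (h f : PowerSeries K) : PowerSeries K :=
  PowerSeries.mk fun N =>
    ∑ j ∈ Finset.range (N + 1), PowerSeries.coeff j h * PowerSeries.coeff N (f ^ j)

open PowerSeries Finset


section Aux
variable {K : Type*} [Field K]

lemma coeff_zero_of_X_pow_dvd {g : PowerSeries K} {k N : ℕ}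
    (h : X ^ k ∣ g) (hN : N < k) : PowerSeries.coeff N g = 0 :=
  (PowerSeries.X_pow_dvd_iff.mp h) N hN

lemma X_pow_dvd_pow {g : PowerSeries K} {k : ℕ} (h : X ^ k ∣ g) (j : ℕ) :
    X ^ (k * j) ∣ g ^ j := by
  rw [pow_mul]; exact pow_dvd_pow_of_dvd h j

lemma coeff_pow_self {g : PowerSeries K} (h0 : PowerSeries.coeff 0 g = 0) (k : ℕ) :
    PowerSeries.coeff k (g ^ k) = (PowerSeries.coeff 1 g) ^ k := by
  have hXd : X ∣ g := PowerSeries.X_dvd_iff.mpr (by rw [← PowerSeries.coeff_zero_eq_constantCoeff]; exact h0)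
  induction k with
  | zero => simp
  | succ k ih =>
    rw [pow_succ, PowerSeries.coeff_mul, Finset.sum_eq_single (k, 1)]
    · rw [ih, pow_succ]
    · rintro ⟨p, q⟩ hmem hne
      rw [Finset.HasAntidiagonal.mem_antidiagonal] at hmem
      rcases Nat.lt_or_ge p k with hp | hp
      · have : PowerSeries.coeff p (g ^ k) = 0 := by
          apply coeff_zero_of_X_pow_dvd _ hp
          simpa using X_pow_dvd_pow (k := 1) (by simpa using hXd) k
        simp [this]
      · have hq : q = 0 := by
          rcases Nat.lt_or_ge p (k + 1) with hp' | hp'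
          · have : p = k := by omega
            exfalso; apply hne; simp at hmem ⊢; omega
          · omega
        subst hq; simp [h0]
    · intro hmem
      exfalso; apply hmem; rw [Finset.HasAntidiagonal.mem_antidiagonal]

lemma coeff_pow_split {h : PowerSeries K} (h0 : PowerSeries.coeff 0 h = 0)
    (h1 : PowerSeries.coeff 1 h = 1)
    {M n N : ℕ} (hM : 2 ≤ M) (hn : 2 ≤ n) (hN : N + 1 = n + M) :
    PowerSeries.coeff N (h ^ M) =
      M * PowerSeries.coeff n h +
        PowerSeries.coeff N
          ((∑ j ∈ Finset.range n, PowerSeries.C (PowerSeries.coeff j h) * X ^ j) ^ M) := by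
  obtain ⟨M', rfl⟩ : ∃ M', M = M' + 2 := ⟨M - 2, by omega⟩
  set T : PowerSeries K := ∑ j ∈ Finset.range n, PowerSeries.C (PowerSeries.coeff j h) * X ^ j with hT
  have hTc : ∀ i, PowerSeries.coeff i T = if i < n then PowerSeries.coeff i h else 0 := by
    intro i
    rw [hT, map_sum]
    simp only [map_mul, PowerSeries.coeff_C_mul, PowerSeries.coeff_X_pow]
    simp only [mul_ite, mul_one, mul_zero]
    rw [Finset.sum_ite_eq]
    simp [Finset.mem_range]
  set R : PowerSeries K := h - T with hR
  have hhTR : h = T + R := by rw [hR]; ring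
  have hRc : ∀ i, i < n → PowerSeries.coeff i R = 0 := by
    intro i hi; rw [hR, map_sub, hTc i, if_pos hi, sub_self]
  have hRd : X ^ n ∣ R := PowerSeries.X_pow_dvd_iff.mpr hRc
  have hTd : X ∣ T := by
    rw [PowerSeries.X_dvd_iff, ← PowerSeries.coeff_zero_eq_constantCoeff, hTc 0,
      if_pos (by omega), h0]
  have hTd' : ∀ k : ℕ, X ^ k ∣ T ^ k := fun k => by
    simpa using X_pow_dvd_pow (k := 1) (by simpa using hTd) k
  conv_lhs => rw [hhTR, add_pow]
  rw [map_sum]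
  rw [Finset.sum_range_succ, Finset.sum_range_succ]
  have hzero : ∀ k ∈ Finset.range (M' + 1),
      PowerSeries.coeff N (T ^ k * R ^ (M' + 2 - k) * ((M' + 2).choose k : PowerSeries K)) = 0 := by
    intro k hk
    rw [Finset.mem_range] at hk
    set d : ℕ := M' + 2 - k with hd
    have hd2 : 2 ≤ d := by omega
    have hdvd : X ^ (k + n * d) ∣ T ^ k * R ^ d * ((M' + 2).choose k : PowerSeries K) := by
      rw [pow_add]
      exact Dvd.dvd.mul_right (mul_dvd_mul (hTd' k) (X_pow_dvd_pow hRd d)) _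
    apply coeff_zero_of_X_pow_dvd hdvd
    have : n + d ≤ n * d := Nat.add_le_mul hn hd2
    omega
  rw [Finset.sum_eq_zero hzero, zero_add]
  -- the k = M'+1 term
  have hterm1 : PowerSeries.coeff N
      (T ^ (M' + 1) * R ^ (M' + 2 - (M' + 1)) * ((M' + 2).choose (M' + 1) : PowerSeries K))
      = (M' + 2 : K) * PowerSeries.coeff n h := by
    have : M' + 2 - (M' + 1) = 1 := by omega
    rw [this, pow_one, Nat.choose_succ_self_right, ← map_natCast (PowerSeries.C (R := K)) (M' + 2),
      PowerSeries.coeff_mul_C, PowerSeries.coeff_mul, Finset.sum_eq_single (M' + 1, n)]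
    · rw [coeff_pow_self (by rw [hTc 0, if_pos (by omega), h0]),
        hTc 1, if_pos (by omega), h1, one_pow, one_mul, hR, map_sub, hTc n, if_neg (by omega),
        sub_zero]
      push_cast; ring
    · rintro ⟨p, q⟩ hmem hne
      rw [Finset.HasAntidiagonal.mem_antidiagonal] at hmem
      have hmem' : p + q = N := hmem
      rcases Nat.lt_or_ge p (M' + 1) with hp | hp
      · rw [coeff_zero_of_X_pow_dvd (hTd' (M' + 1)) hp, zero_mul]
      · rcases Nat.lt_or_ge q n with hq | hq
        · rw [hRc q hq, mul_zero]
        · exfalso; apply hne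
          have hp' : p = M' + 1 := by omega
          have hq' : q = n := by omega
          simp [hp', hq']
    · intro hmem
      exfalso; apply hmem; rw [Finset.HasAntidiagonal.mem_antidiagonal]; omega
  rw [hterm1]
  have : M' + 2 - (M' + 2) = 0 := by omega
  rw [this, pow_zero, mul_one, Nat.choose_self, Nat.cast_one, mul_one]
  push_cast; ring

noncomputable def bcoef (f : PowerSeries K) (M : ℕ) : ℕ → K
  | 0 => 0
  | 1 => 1
  | n + 2 =>
    ((M : K) * PowerSeries.coeff M f)⁻¹ *
      ((∑ j ∈ (Finset.range (n + 2)).attach,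
          bcoef f M j * PowerSeries.coeff (n + M + 1) (f ^ (j : ℕ))) -
       PowerSeries.coeff M f * PowerSeries.coeff (n + M + 1)
         ((∑ j ∈ (Finset.range (n + 2)).attach,
            PowerSeries.C (bcoef f M j) * X ^ (j : ℕ)) ^ M))
  termination_by n => n
  decreasing_by all_goals exact Finset.mem_range.mp j.2

lemma bcoef_eq (f : PowerSeries K) (M : ℕ) (n : ℕ) :
    bcoef f M (n + 2) =
    ((M : K) * PowerSeries.coeff M f)⁻¹ *
      ((∑ j ∈ Finset.range (n + 2),
          bcoef f M j * PowerSeries.coeff (n + M + 1) (f ^ j)) -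
       PowerSeries.coeff M f * PowerSeries.coeff (n + M + 1)
         ((∑ j ∈ Finset.range (n + 2),
            PowerSeries.C (bcoef f M j) * X ^ j) ^ M)) := by
  rw [bcoef, Finset.sum_attach (Finset.range (n + 2))
    (fun j => bcoef f M j * PowerSeries.coeff (n + M + 1) (f ^ j)),
    Finset.sum_attach (Finset.range (n + 2))
    (fun j => PowerSeries.C (bcoef f M j) * X ^ j)]

end Aux

/-- formal Böttcher-type normal form at a superattracting fixed
point: over a complete valued field `K` of characteristic zero, if
`f(x) = ∑_{i≥M} f_i x^i` with `M ≥ 2`, all `‖f_i‖ ≤ 1` and `λ = f_M ≠ 0`, then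
there is a formal power series `h(x) = x + ∑_{j≥2} h_j x^j` with
`h(f(x)) = λ·(h(x))^M`. -/
theorem exists_formal_boettcher_normal_form
    {K : Type*} [NontriviallyNormedField K] [CharZero K] [CompleteSpace K]
    (M : ℕ) (hM : 2 ≤ M)
    (f : PowerSeries K) (hlow : ∀ i < M, PowerSeries.coeff i f = 0)
    (hf : ∀ i, ‖PowerSeries.coeff i f‖ ≤ 1)
    (hlam0 : PowerSeries.coeff M f ≠ 0) :
    ∃ h : PowerSeries K,
      PowerSeries.coeff 0 h = 0 ∧ PowerSeries.coeff 1 h = 1 ∧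
      PowerSeries.formalComp h f = PowerSeries.C (PowerSeries.coeff M f) * h ^ M := by
  have hMK : (M : K) ≠ 0 := Nat.cast_ne_zero.mpr (by omega)
  have hfd : X ^ M ∣ f := PowerSeries.X_pow_dvd_iff.mpr hlow
  have hfj : ∀ j N : ℕ, N < M * j → PowerSeries.coeff N (f ^ j) = 0 := fun j N hNj =>
    coeff_zero_of_X_pow_dvd (X_pow_dvd_pow hfd j) hNj
  have hb0 : bcoef f M 0 = 0 := by rw [bcoef]
  have hb1 : bcoef f M 1 = 1 := by rw [bcoef]
  refine ⟨PowerSeries.mk (bcoef f M), by simpa using hb0, by simpa using hb1, ?_⟩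
  set h : PowerSeries K := PowerSeries.mk (bcoef f M) with hh
  have hc : ∀ i, PowerSeries.coeff i h = bcoef f M i := fun i => PowerSeries.coeff_mk i _
  have h0 : PowerSeries.coeff 0 h = 0 := by rw [hc 0, hb0]
  have h1 : PowerSeries.coeff 1 h = 1 := by rw [hc 1, hb1]
  have hhd : ∀ k : ℕ, X ^ k ∣ h ^ k := fun k => by
    have : X ∣ h := PowerSeries.X_dvd_iff.mpr
      (by rw [← PowerSeries.coeff_zero_eq_constantCoeff]; exact h0)
    simpa using X_pow_dvd_pow (k := 1) (by simpa using this) k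
  ext N
  rw [PowerSeries.formalComp, PowerSeries.coeff_mk, PowerSeries.coeff_C_mul]
  rcases lt_trichotomy N M with hlt | rfl | hgt
  · -- N < M : both sides vanish
    have hRHS : PowerSeries.coeff N (h ^ M) = 0 := by
      apply coeff_zero_of_X_pow_dvd _ hlt
      simpa using hhd M
    rw [hRHS, mul_zero]
    apply Finset.sum_eq_zero
    intro j hj
    rcases Nat.eq_zero_or_pos j with rfl | hjpos
    · rw [hc 0, hb0, zero_mul]
    · rw [hfj j N (by nlinarith), mul_zero]
  · -- N = M
    have hRHS : PowerSeries.coeff N (h ^ N) = 1 := by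
      rw [coeff_pow_self h0, h1, one_pow]
    rw [hRHS, mul_one, Finset.sum_eq_single 1]
    · rw [hc 1, hb1, pow_one, one_mul]
    · intro j hj hjne
      rcases Nat.eq_zero_or_pos j with rfl | hjpos
      · rw [hc 0, hb0, zero_mul]
      · have hj2 : 2 ≤ j := by omega
        rw [hfj j N (by nlinarith), mul_zero]
    · intro hmem
      exfalso; exact hmem (Finset.mem_range.mpr (by omega))
  · -- N > M
    obtain ⟨m, rfl⟩ : ∃ m, N = m + M + 1 := ⟨N - M - 1, by omega⟩
    set N := m + M + 1 with hNdef
    have hsub : Finset.range (m + 2) ⊆ Finset.range (N + 1) :=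
      Finset.range_subset_range.mpr (by omega)
    have hz : ∀ j ∈ Finset.range (N + 1), j ∉ Finset.range (m + 2) →
        PowerSeries.coeff j h * PowerSeries.coeff N (f ^ j) = 0 := by
      intro j _ hj
      rw [Finset.mem_range, not_lt] at hj
      have : M * (m + 2) ≤ M * j := Nat.mul_le_mul_left M hj
      have hadd : M + (m + 2) ≤ M * (m + 2) := Nat.add_le_mul hM (by omega)
      rw [hfj j N (by omega), mul_zero]
    rw [← Finset.sum_subset hsub hz]
    have hsplit := coeff_pow_split h0 h1 hM (show 2 ≤ m + 2 by omega)
      (show N + 1 = (m + 2) + M by omega)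
    rw [hsplit]
    simp only [hc]
    have hrec := bcoef_eq f M m
    set lam : K := PowerSeries.coeff M f with hlam
    set S1 : K := ∑ j ∈ Finset.range (m + 2), bcoef f M j * PowerSeries.coeff (m + M + 1) (f ^ j)
      with hS1
    set S2 : K := PowerSeries.coeff (m + M + 1)
      ((∑ j ∈ Finset.range (m + 2), PowerSeries.C (bcoef f M j) * X ^ j) ^ M) with hS2
    rw [hrec]
    field_simp
    ring
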